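/- arXiv:math/0309143 — 4 statements merged into one kernel-verified Lean document; each statement's English description precedes it below -/
import Mathlib

section
/- Let A be a complex *-algebra with a positive trace τ (i.e. τ(a*a) ≥ 0 and τ(ab) = τ(ba)) and two commuting *-derivations ∂₁, ∂₂ satisfying τ(∂μ(a)) = 0 for all a. For a self-adjoint projection p ∈ A define S(p) = τ(∂₁(p)∂₁(p) + ∂₂(p)∂₂(p)) and Q(p) = -i·τ(p(∂₁(p)∂₂(p) - ∂₂(p)∂₁(p))). Then S(p) ≥ 2|Q(p)|. -/
open ComplexOrder

/-- Belavin–Polyakov bound: `S(p) ≥ 2|Q(p)|` for a self-adjoint projection `p`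
in a complex *-algebra with positive invariant trace and commuting *-derivations. -/
theorem belavin_polyakov_bound
    (A : Type*) [Ring A] [Algebra ℂ A] [StarRing A] [StarModule ℂ A]
    (τ : A →ₗ[ℂ] ℂ)
    (hpos : ∀ a : A, 0 ≤ τ (star a * a))
    (htrace : ∀ a b : A, τ (a * b) = τ (b * a))
    (d₁ d₂ : A →ₗ[ℂ] A)
    (hleib₁ : ∀ a b : A, d₁ (a * b) = d₁ a * b + a * d₁ b)
    (hleib₂ : ∀ a b : A, d₂ (a * b) = d₂ a * b + a * d₂ b)
    (hstar₁ : ∀ a : A, d₁ (star a) = star (d₁ a))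
    (hstar₂ : ∀ a : A, d₂ (star a) = star (d₂ a))
    (hcomm : ∀ a : A, d₁ (d₂ a) = d₂ (d₁ a))
    (hinv₁ : ∀ a : A, τ (d₁ a) = 0)
    (hinv₂ : ∀ a : A, τ (d₂ a) = 0)
    (p : A) (hp : p * p = p) (hps : star p = p) :
    (↑(2 * ‖-Complex.I * τ (p * (d₁ p * d₂ p - d₂ p * d₁ p))‖) : ℂ)
      ≤ τ (d₁ p * d₁ p + d₂ p * d₂ p) := by
  set u := d₁ p with hu
  set v := d₂ p with hv
  have hpu : u = u * p + p * u := by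
    have h := hleib₁ p p; rw [hp, ← hu] at h; exact h
  have hpv : v = v * p + p * v := by
    have h := hleib₂ p p; rw [hp, ← hv] at h; exact h
  have hsu : star u = u := by rw [hu, ← hstar₁, hps]
  have hsv : star v = v := by rw [hv, ← hstar₂, hps]
  have half : ∀ x : A, x = x * p + p * x → 2 * τ (p * (x * x)) = τ (x * x) := by
    intro x hx
    have e : x * (p * x) + p * (x * x) = x * x := by
      have := congrArg (· * x) hx.symm
      simpa [add_mul, mul_assoc] using this
    have e2 : τ (x * (p * x)) + τ (p * (x * x)) = τ (x * x) := by
      rw [← map_add, e]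
    have e3 : τ (x * (p * x)) = τ (p * (x * x)) := by
      rw [htrace, mul_assoc]
    linear_combination e2 - e3
  set F : ℂ := τ (p * (u * v - v * u)) with hF
  set x : ℂ := τ (p * (u * u)) + τ (p * (v * v)) with hx
  have key : ∀ s : ℂ, star s = -s → s * s = -1 → 0 ≤ x + s * F := by
    intro s hsneg hss
    have hstar_a : star ((u + s • v) * p) = p * (u - s • v) := by
      rw [star_mul, hps, star_add, star_smul, hsu, hsv, hsneg, neg_smul, ← sub_eq_add_neg]
    have id1 : (p * (u - s • v)) * ((u + s • v) * p)
        = p * ((u * u) * p) + p * ((v * v) * p)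
          + s • (p * ((u * v) * p)) - s • (p * ((v * u) * p)) := by
      simp only [mul_add, add_mul, mul_sub, sub_mul, smul_mul_assoc, mul_smul_comm,
        smul_add, smul_sub, smul_smul, hss, neg_smul, one_smul, neg_one_smul, neg_neg,
        mul_neg, neg_mul, mul_one, one_mul, mul_assoc]
      abel
    have hτ : τ (star ((u + s • v) * p) * ((u + s • v) * p)) = x + s * F := by
      rw [hstar_a, id1]
      have c1 : τ (p * ((u * u) * p)) = τ (p * (u * u)) := by
        rw [htrace, mul_assoc, hp, htrace]
      have c2 : τ (p * ((v * v) * p)) = τ (p * (v * v)) := by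
        rw [htrace, mul_assoc, hp, htrace]
      have c3 : τ (p * ((u * v) * p)) = τ (p * (u * v)) := by
        rw [htrace, mul_assoc, hp, htrace]
      have c4 : τ (p * ((v * u) * p)) = τ (p * (v * u)) := by
        rw [htrace, mul_assoc, hp, htrace]
      simp only [map_add, map_sub, map_smul, c1, c2, c3, c4, smul_eq_mul]
      rw [hx, hF, mul_sub, map_sub]
      ring
    have := hpos ((u + s • v) * p)
    rwa [hτ] at this
  have h₁ : 0 ≤ x + Complex.I * F := key Complex.I (by simp [Complex.star_def]) (by
    simpa using Complex.I_mul_I)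
  have h₂ : 0 ≤ x - Complex.I * F := by
    have := key (-Complex.I) (by simp [Complex.star_def]) (by simpa using Complex.I_mul_I)
    rwa [neg_mul, ← sub_eq_add_neg] at this
  have hsum : τ (u * u + v * v) = 2 * x := by
    rw [map_add, hx]
    have a1 := half u hpu
    have a2 := half v hpv
    linear_combination -a1 - a2
  rw [hsum]
  rw [Complex.le_def] at h₁ h₂ ⊢
  obtain ⟨h1r, h1i⟩ := h₁
  obtain ⟨h2r, h2i⟩ := h₂
  simp only [Complex.add_re, Complex.add_im, Complex.sub_re, Complex.sub_im,
    Complex.mul_re, Complex.mul_im, Complex.I_re, Complex.I_im, Complex.zero_re,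
    Complex.zero_im, zero_mul, one_mul, zero_sub, zero_add, sub_zero, add_zero] at h1r h1i h2r h2i
  have hFre : F.re = 0 := by linarith
  have hxim : x.im = 0 := by linarith
  have habs : ‖F‖ = |F.im| := by
    simp [Complex.norm_def, Complex.normSq_apply, hFre, Real.sqrt_mul_self_eq_abs]
  constructor
  · have habs' : |F.im| ≤ x.re := abs_le.2 ⟨by linarith, by linarith⟩
    simp [map_mul, habs, Complex.mul_re]
    linarith
  · simp [Complex.mul_im, hxim]
end

section
/- Let A be an algebra with commuting derivations ∂₁, ∂₂, with associated holomorphic/antiholomorphic derivations ∂, ∂̄ and Laplacian Δ = g^{μν}∂μ∂ν = 4∂∂̄. If a projection p (p² = p) satisfies the self-duality equations ∂̄(p)·p = 0 and p·∂(p) = 0, then p satisfies the field equations pΔ(p) - Δ(p)p = 0. -/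
/-- The holomorphic derivation `∂ = (1/(τ-τ̄))(-τ̄∂₁ + ∂₂)`. -/
noncomputable def hol {A : Type*} [AddCommGroup A] [Module ℂ A]
    (d₁ d₂ : A →ₗ[ℂ] A) (τ : ℂ) : A →ₗ[ℂ] A :=
  (1 / (τ - (starRingEnd ℂ) τ)) • (-((starRingEnd ℂ) τ) • d₁ + d₂)

/-- The antiholomorphic derivation `∂̄ = (1/(τ-τ̄))(τ∂₁ - ∂₂)`. -/
noncomputable def antihol {A : Type*} [AddCommGroup A] [Module ℂ A]
    (d₁ d₂ : A →ₗ[ℂ] A) (τ : ℂ) : A →ₗ[ℂ] A :=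
  (1 / (τ - (starRingEnd ℂ) τ)) • (τ • d₁ - d₂)


/-- A projection satisfying the self-duality equations satisfies the field equations
`pΔ(p) - Δ(p)p = 0` with `Δ = 4∂∂̄`. -/
theorem selfdual_implies_field_equations
    (A : Type*) [Ring A] [Algebra ℂ A]
    (d₁ d₂ : A →ₗ[ℂ] A)
    (hleib₁ : ∀ a b : A, d₁ (a * b) = d₁ a * b + a * d₁ b)
    (hleib₂ : ∀ a b : A, d₂ (a * b) = d₂ a * b + a * d₂ b)
    (hcomm : ∀ a : A, d₁ (d₂ a) = d₂ (d₁ a))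
    (τ : ℂ) (hτ : 0 < τ.im)
    (p : A) (hp : p * p = p)
    (hsd₁ : antihol d₁ d₂ τ p * p = 0)
    (hsd₂ : p * hol d₁ d₂ τ p = 0) :
    p * ((4 : ℂ) • hol d₁ d₂ τ (antihol d₁ d₂ τ p))
      - ((4 : ℂ) • hol d₁ d₂ τ (antihol d₁ d₂ τ p)) * p = 0 := by
  set D := hol d₁ d₂ τ with hD
  set E := antihol d₁ d₂ τ with hE
  have hleibD : ∀ a b : A, D (a * b) = D a * b + a * D b := by
    intro a b
    simp only [hD, hol, LinearMap.smul_apply, LinearMap.add_apply, hleib₁ a b, hleib₂ a b,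
      smul_add, smul_sub, smul_neg, mul_add, add_mul, mul_sub, sub_mul, mul_neg, neg_mul,
      smul_mul_assoc, mul_smul_comm, LinearMap.neg_apply]
    module
  have hleibE : ∀ a b : A, E (a * b) = E a * b + a * E b := by
    intro a b
    simp only [hE, antihol, LinearMap.smul_apply, LinearMap.sub_apply, hleib₁ a b, hleib₂ a b,
      smul_add, smul_sub, smul_neg, mul_add, add_mul, mul_sub, sub_mul, mul_neg, neg_mul,
      smul_mul_assoc, mul_smul_comm]
    module
  have hcommDE : ∀ a : A, D (E a) = E (D a) := by
    intro a
    simp only [hD, hE, hol, antihol, LinearMap.smul_apply, LinearMap.add_apply,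
      LinearMap.sub_apply, LinearMap.neg_apply, map_smul, map_add, map_sub, map_neg,
      hcomm a]
    module
  have h1 : E p = p * E p := by
    have := hleibE p p
    rw [hp, hsd₁, zero_add] at this
    exact this
  have h2 : D p = D p * p := by
    have := hleibD p p
    rw [hp, hsd₂, add_zero] at this
    exact this
  have h3 : D (E p) - p * D (E p) = D p * E p := by
    have := hleibD p (E p)
    rw [← h1] at this
    linear_combination (norm := noncomm_ring) this
  have h4 : D (E p) - D (E p) * p = D p * E p := by
    have h := hleibE (D p) p
    rw [← h2, ← hcommDE p] at h
    linear_combination (norm := noncomm_ring) h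
  have key : p * D (E p) - D (E p) * p = 0 := by
    linear_combination (norm := noncomm_ring) h4 - h3
  rw [mul_smul_comm, smul_mul_assoc, ← smul_sub, key, smul_zero]
end

section
/- Let A be an algebra with commuting derivations ∂₁, ∂₂, associated ∂, ∂̄, and Δ = 4∂∂̄. If a projection p satisfies the anti-self-duality equations ∂(p)·p = 0 and p·∂̄(p) = 0, then pΔ(p) - Δ(p)p = 0. -/
lemma smul_leibniz {A : Type*} [Ring A] [Algebra ℂ A] (d : A →ₗ[ℂ] A) (c : ℂ)
    (h : ∀ a b : A, d (a * b) = d a * b + a * d b) :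
    ∀ a b : A, (c • d) (a * b) = (c • d) a * b + a * (c • d) b := by
  intro a b
  simp [h, smul_add, smul_mul_assoc, mul_smul_comm]

lemma add_leibniz {A : Type*} [Ring A] [Algebra ℂ A] (d e : A →ₗ[ℂ] A)
    (hd : ∀ a b : A, d (a * b) = d a * b + a * d b)
    (he : ∀ a b : A, e (a * b) = e a * b + a * e b) :
    ∀ a b : A, (d + e) (a * b) = (d + e) a * b + a * (d + e) b := by
  intro a b
  simp only [LinearMap.add_apply, hd, he, add_mul, mul_add]
  abel

lemma hol_leibniz {A : Type*} [Ring A] [Algebra ℂ A] (d₁ d₂ : A →ₗ[ℂ] A) (τ : ℂ)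
    (hleib₁ : ∀ a b : A, d₁ (a * b) = d₁ a * b + a * d₁ b)
    (hleib₂ : ∀ a b : A, d₂ (a * b) = d₂ a * b + a * d₂ b) :
    ∀ a b : A, hol d₁ d₂ τ (a * b) = hol d₁ d₂ τ a * b + a * hol d₁ d₂ τ b := by
  apply smul_leibniz
  apply add_leibniz
  · exact smul_leibniz _ _ hleib₁
  · exact hleib₂

lemma antihol_leibniz {A : Type*} [Ring A] [Algebra ℂ A] (d₁ d₂ : A →ₗ[ℂ] A) (τ : ℂ)
    (hleib₁ : ∀ a b : A, d₁ (a * b) = d₁ a * b + a * d₁ b)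
    (hleib₂ : ∀ a b : A, d₂ (a * b) = d₂ a * b + a * d₂ b) :
    ∀ a b : A, antihol d₁ d₂ τ (a * b) = antihol d₁ d₂ τ a * b + a * antihol d₁ d₂ τ b := by
  have h : ∀ a b : A, (τ • d₁ - d₂) (a * b) = (τ • d₁ - d₂) a * b + a * (τ • d₁ - d₂) b := by
    intro a b
    have := smul_leibniz d₁ τ hleib₁ a b
    simp only [LinearMap.sub_apply, this, hleib₂, sub_mul, mul_sub]
    abel
  exact smul_leibniz _ _ h

lemma hol_antihol_comm {A : Type*} [AddCommGroup A] [Module ℂ A] (d₁ d₂ : A →ₗ[ℂ] A) (τ : ℂ)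
    (hcomm : ∀ a : A, d₁ (d₂ a) = d₂ (d₁ a)) (a : A) :
    hol d₁ d₂ τ (antihol d₁ d₂ τ a) = antihol d₁ d₂ τ (hol d₁ d₂ τ a) := by
  simp only [hol, antihol, LinearMap.smul_apply, LinearMap.add_apply, LinearMap.sub_apply,
    LinearMap.neg_apply, map_add, map_sub, map_neg, map_smul, hcomm, smul_sub, smul_add,
    smul_neg, smul_smul]
  module

/-- A projection satisfying the anti-self-duality equations satisfies the field equations
`pΔ(p) - Δ(p)p = 0` with `Δ = 4∂∂̄`. -/
theorem antiselfdual_implies_field_equations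
    (A : Type*) [Ring A] [Algebra ℂ A]
    (d₁ d₂ : A →ₗ[ℂ] A)
    (hleib₁ : ∀ a b : A, d₁ (a * b) = d₁ a * b + a * d₁ b)
    (hleib₂ : ∀ a b : A, d₂ (a * b) = d₂ a * b + a * d₂ b)
    (hcomm : ∀ a : A, d₁ (d₂ a) = d₂ (d₁ a))
    (τ : ℂ) (hτ : 0 < τ.im)
    (p : A) (hp : p * p = p)
    (hasd₁ : hol d₁ d₂ τ p * p = 0)
    (hasd₂ : p * antihol d₁ d₂ τ p = 0) :
    p * ((4 : ℂ) • hol d₁ d₂ τ (antihol d₁ d₂ τ p))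
      - ((4 : ℂ) • hol d₁ d₂ τ (antihol d₁ d₂ τ p)) * p = 0 := by
  set X := hol d₁ d₂ τ p with hX
  set Y := antihol d₁ d₂ τ p with hY
  have h1 : X * Y + p * hol d₁ d₂ τ Y = 0 := by
    have := hol_leibniz d₁ d₂ τ hleib₁ hleib₂ p Y
    rw [hasd₂, map_zero] at this
    exact this.symm
  have h2 : antihol d₁ d₂ τ X * p + X * Y = 0 := by
    have := antihol_leibniz d₁ d₂ τ hleib₁ hleib₂ X p
    rw [hasd₁, map_zero] at this
    exact this.symm
  have h3 : hol d₁ d₂ τ Y * p = antihol d₁ d₂ τ X * p := by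
    rw [hY, hX, hol_antihol_comm d₁ d₂ τ hcomm]
  have key : p * hol d₁ d₂ τ Y = hol d₁ d₂ τ Y * p := by
    have e1 : p * hol d₁ d₂ τ Y = -(X * Y) := eq_neg_of_add_eq_zero_right h1
    have e2 : antihol d₁ d₂ τ X * p = -(X * Y) := eq_neg_of_add_eq_zero_left h2
    rw [e1, h3, e2]
  rw [mul_smul_comm, smul_mul_assoc, key, sub_self]
end

section
/- Let U₁, U₂ (the left endomorphism action) and Z₁, Z₂ (the right module action) on S(ℝ × ℤ_q) be defined by (U₁ξ)(s,k)=ξ(s-1/q,k-1), (U₂ξ)(s,k)=e^{2πi(s/ε - ak)/q}ξ(s,k), (ξZ₁)(s,k)=ξ(s-ε̃,k-r), (ξZ₂)(s,k)=e^{2πi(s-k/q)}ξ(s,k), where ε̃ = r/q - α, ε = ε̃, and a, r, q ∈ ℤ with ar ≡ 1 mod q. Then the left and right actions commute: Uᵢ(ξZⱼ) = (Uᵢξ)Zⱼ for all i,j ∈ {1,2}. -/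
lemma val_sub_intCast (q : ℕ) (hq : 0 < q) (k : ZMod q) (c : ℤ) :
    ∃ m : ℤ, ((k - (c : ZMod q)).val : ℤ) = (k.val : ℤ) - c + m * q := by
  haveI : NeZero q := ⟨hq.ne'⟩
  set d : ℤ := ((k - (c : ZMod q)).val : ℤ) - ((k.val : ℤ) - c) with hd
  have h : ((d : ℤ) : ZMod q) = 0 := by
    rw [hd]
    push_cast
    simp [ZMod.natCast_val, ZMod.cast_id]
  obtain ⟨m, hm⟩ := (ZMod.intCast_zmod_eq_zero_iff_dvd _ q).1 h
  exact ⟨m, by rw [hd] at hm; linarith⟩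

/-- Bimodule property of the Heisenberg module: the left endomorphism action `U₁, U₂`
commutes with the right module action `Z₁, Z₂`, provided `ar ≡ 1 (mod q)`. -/
theorem left_right_actions_commute
    (q : ℕ) (hq : 0 < q) (r a : ℤ) (α : ℝ)
    (εt : ℝ) (hεt : εt = (r : ℝ) / (q : ℝ) - α) (hne : εt ≠ 0)
    (har : (a * r) % (q : ℤ) = 1 % (q : ℤ))
    (U₁ U₂ Z₁ Z₂ : (ℝ → ZMod q → ℂ) → (ℝ → ZMod q → ℂ))
    (hU₁ : ∀ (ξ : ℝ → ZMod q → ℂ) (s : ℝ) (k : ZMod q),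
      U₁ ξ s k = ξ (s - 1 / (q : ℝ)) (k - 1))
    (hU₂ : ∀ (ξ : ℝ → ZMod q → ℂ) (s : ℝ) (k : ZMod q),
      U₂ ξ s k = Complex.exp (2 * (Real.pi : ℂ) * Complex.I *
        (((s / εt : ℝ) : ℂ) - (a : ℂ) * (k.val : ℂ)) / (q : ℂ)) * ξ s k)
    (hZ₁ : ∀ (ξ : ℝ → ZMod q → ℂ) (s : ℝ) (k : ZMod q),
      Z₁ ξ s k = ξ (s - εt) (k - (r : ZMod q)))
    (hZ₂ : ∀ (ξ : ℝ → ZMod q → ℂ) (s : ℝ) (k : ZMod q),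
      Z₂ ξ s k = Complex.exp (2 * (Real.pi : ℂ) * Complex.I *
        ((s : ℂ) - (k.val : ℂ) / (q : ℂ))) * ξ s k) :
    ∀ (ξ : ℝ → ZMod q → ℂ) (s : ℝ) (k : ZMod q),
      U₁ (Z₁ ξ) s k = Z₁ (U₁ ξ) s k ∧
      U₁ (Z₂ ξ) s k = Z₂ (U₁ ξ) s k ∧
      U₂ (Z₁ ξ) s k = Z₁ (U₂ ξ) s k ∧
      U₂ (Z₂ ξ) s k = Z₂ (U₂ ξ) s k := by
  have hqC : (q : ℂ) ≠ 0 := Nat.cast_ne_zero.2 hq.ne'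
  have hεC : (εt : ℂ) ≠ 0 := Complex.ofReal_ne_zero.2 hne
  obtain ⟨t, ht⟩ : (q : ℤ) ∣ a * r - 1 := (Int.ModEq.dvd (Int.ModEq.symm har))
  intro ξ s k
  refine ⟨?_, ?_, ?_, ?_⟩
  · rw [hU₁, hZ₁, hZ₁, hU₁]
    congr 1
    · ring
    · ring
  · rw [hU₁, hZ₂, hZ₂, hU₁]
    obtain ⟨m, hm⟩ := val_sub_intCast q hq k 1
    have hmC : (((k - 1).val : ℂ)) = (k.val : ℂ) - 1 + m * q := by
      have : ((k - ((1 : ℤ) : ZMod q)).val : ℂ) = ((k.val : ℤ) - 1 + m * q : ℤ) := by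
        exact_mod_cast congrArg (fun z : ℤ => (z : ℂ)) hm
      simpa using this
    congr 1
    rw [Complex.exp_eq_exp_iff_exists_int]
    refine ⟨-m, ?_⟩
    rw [hmC]
    push_cast
    field_simp
    ring
  · rw [hU₂, hZ₁, hZ₁, hU₂]
    obtain ⟨m, hm⟩ := val_sub_intCast q hq k r
    have hmC : (((k - (r : ZMod q)).val : ℂ)) = (k.val : ℂ) - r + m * q := by
      exact_mod_cast congrArg (fun z : ℤ => (z : ℂ)) hm
    have htC : (a : ℂ) * r - 1 = q * t := by exact_mod_cast congrArg (fun z : ℤ => (z : ℂ)) ht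
    congr 1
    rw [Complex.exp_eq_exp_iff_exists_int]
    refine ⟨a * m - t, ?_⟩
    have h1 : (s - εt) / εt = s / εt - 1 := by rw [sub_div, div_self hne]
    rw [hmC, h1]
    push_cast
    field_simp
    linear_combination (-(εt : ℂ)) * htC
  · rw [hU₂, hZ₂, hZ₂, hU₂]
    ring
end
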